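/- Deterministic extragradient convergence: let F : ℝ^d → ℝ^d be monotone and L-Lipschitz with a zero z⋆, and consider the unconstrained extragradient iteration y^k = z^k − η F(z^k), z^{k+1} = z^k − η F(y^k) with step size η ∈ (0, 1/(√2·L)]. Then ‖z^{k+1} − z⋆‖² ≤ ‖z^k − z⋆‖² − (1 − η²L²)·‖y^k − z^k‖², and consequently ∑_{k=0}^{∞} ‖y^k − z^k‖² ≤ ‖z^0 − z⋆‖²/(1 − η²L²), which implies min_{k < K} ‖F(z^k)‖² ≤ ‖z^0 − z⋆‖² / (η²(1 − η²L²)·K). -/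

import Mathlib

lemma eg_id {E : Type*} [NormedAddCommGroup E] [InnerProductSpace ℝ E]
    (a f g : E) (η : ℝ) :
    ‖a - η • g‖ ^ 2 = ‖a‖ ^ 2 - 2 * η * (inner ℝ g (a - η • f) : ℝ)
      + η ^ 2 * ‖g - f‖ ^ 2 - η ^ 2 * ‖f‖ ^ 2 := by
  simp only [← real_inner_self_eq_norm_sq, inner_sub_left, inner_sub_right,
    inner_smul_left, inner_smul_right, RCLike.conj_to_real,
    real_inner_comm a g, real_inner_comm f g, real_inner_comm a f]
  ring

theorem stmt_11 (d : ℕ) (L η : ℝ) (hL : 0 < L)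
    (F : EuclideanSpace ℝ (Fin d) → EuclideanSpace ℝ (Fin d))
    (hmono : ∀ x y, 0 ≤ (inner ℝ (F x - F y) (x - y) : ℝ))
    (hlip : ∀ x y, ‖F x - F y‖ ≤ L * ‖x - y‖)
    (zs : EuclideanSpace ℝ (Fin d)) (hzs : F zs = 0)
    (hη0 : 0 < η) (hη1 : η ≤ 1 / (Real.sqrt 2 * L))
    (z y : ℕ → EuclideanSpace ℝ (Fin d))
    (hy : ∀ k, y k = z k - η • F (z k))
    (hz : ∀ k, z (k + 1) = z k - η • F (y k)) :
    (∀ k, ‖z (k + 1) - zs‖ ^ 2 ≤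
        ‖z k - zs‖ ^ 2 - (1 - η ^ 2 * L ^ 2) * ‖y k - z k‖ ^ 2) ∧
    (∀ K : ℕ, ∑ k ∈ Finset.range K, ‖y k - z k‖ ^ 2 ≤
        ‖z 0 - zs‖ ^ 2 / (1 - η ^ 2 * L ^ 2)) ∧
    (∀ K : ℕ, 0 < K → ∃ k < K,
        ‖F (z k)‖ ^ 2 ≤ ‖z 0 - zs‖ ^ 2 / (η ^ 2 * (1 - η ^ 2 * L ^ 2) * K)) := by
  have hs2 : (0:ℝ) < Real.sqrt 2 := by positivity
  have hηL : η * L ≤ 1 / Real.sqrt 2 := by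
    have h := mul_le_mul_of_nonneg_right hη1 hL.le
    have he : 1 / (Real.sqrt 2 * L) * L = 1 / Real.sqrt 2 := by field_simp
    linarith [he ▸ h]
  have h2 : (Real.sqrt 2) ^ 2 = 2 := Real.sq_sqrt (by norm_num)
  have hc2 : η ^ 2 * L ^ 2 ≤ 1 / 2 := by
    have hm := mul_self_le_mul_self (by positivity : (0:ℝ) ≤ η * L) hηL
    have : 1 / Real.sqrt 2 * (1 / Real.sqrt 2) = 1 / 2 := by
      rw [div_mul_div_comm, one_mul, ← sq, h2]
    nlinarith
  have hcpos : 0 < 1 - η ^ 2 * L ^ 2 := by linarith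
  have hnyz : ∀ k, ‖y k - z k‖ ^ 2 = η ^ 2 * ‖F (z k)‖ ^ 2 := by
    intro k
    have : y k - z k = -(η • F (z k)) := by rw [hy k]; abel
    rw [this, norm_neg, norm_smul, Real.norm_eq_abs, abs_of_pos hη0, mul_pow]
  have key : ∀ k, ‖z (k + 1) - zs‖ ^ 2 ≤
      ‖z k - zs‖ ^ 2 - (1 - η ^ 2 * L ^ 2) * ‖y k - z k‖ ^ 2 := by
    intro k
    have hbz : z (k + 1) - zs = (z k - zs) - η • F (y k) := by rw [hz k]; abel
    have hys : y k - zs = (z k - zs) - η • F (z k) := by rw [hy k]; abel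
    have hid := eg_id (z k - zs) (F (z k)) (F (y k)) η
    rw [← hys] at hid
    have hmon : 0 ≤ (inner ℝ (F (y k)) (y k - zs) : ℝ) := by
      have := hmono (y k) zs; rwa [hzs, sub_zero] at this
    have hlipk : ‖F (y k) - F (z k)‖ ^ 2 ≤ L ^ 2 * ‖y k - z k‖ ^ 2 := by
      have h := hlip (y k) (z k)
      nlinarith [norm_nonneg (F (y k) - F (z k)), norm_nonneg (y k - z k)]
    have heq : η ^ 2 * ‖F (z k)‖ ^ 2 = ‖y k - z k‖ ^ 2 := (hnyz k).symm
    rw [hbz, hid]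
    nlinarith [mul_nonneg hη0.le hmon]
  have hsum2 : ∀ K : ℕ, ∑ k ∈ Finset.range K, ‖y k - z k‖ ^ 2 ≤
      ‖z 0 - zs‖ ^ 2 / (1 - η ^ 2 * L ^ 2) := by
    have hsum : ∀ K : ℕ, (1 - η ^ 2 * L ^ 2) * ∑ k ∈ Finset.range K, ‖y k - z k‖ ^ 2
        ≤ ‖z 0 - zs‖ ^ 2 - ‖z K - zs‖ ^ 2 := by
      intro K
      induction K with
      | zero => simp
      | succ n ih =>
        rw [Finset.sum_range_succ, mul_add]
        have := key n
        linarith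
    intro K
    rw [le_div_iff₀ hcpos, mul_comm]
    have := hsum K
    nlinarith [sq_nonneg ‖z K - zs‖]
  refine ⟨key, hsum2, ?_⟩
  intro K hK
  obtain ⟨k, hk, hmin⟩ := Finset.exists_min_image (Finset.range K)
    (fun j => ‖F (z j)‖ ^ 2) ⟨0, Finset.mem_range.mpr hK⟩
  refine ⟨k, Finset.mem_range.mp hk, ?_⟩
  have hcard : (K : ℝ) * (η ^ 2 * ‖F (z k)‖ ^ 2) ≤
      ∑ j ∈ Finset.range K, ‖y j - z j‖ ^ 2 := by
    calc (K : ℝ) * (η ^ 2 * ‖F (z k)‖ ^ 2)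
        = ∑ _j ∈ Finset.range K, η ^ 2 * ‖F (z k)‖ ^ 2 := by
          rw [Finset.sum_const, Finset.card_range, nsmul_eq_mul]
      _ ≤ ∑ j ∈ Finset.range K, ‖y j - z j‖ ^ 2 := by
          apply Finset.sum_le_sum
          intro j hj
          rw [hnyz j]
          exact mul_le_mul_of_nonneg_left (hmin j hj) (by positivity)
  have h3 : (K : ℝ) * (η ^ 2 * ‖F (z k)‖ ^ 2) ≤ ‖z 0 - zs‖ ^ 2 / (1 - η ^ 2 * L ^ 2) :=
    le_trans hcard (hsum2 K)
  have hKpos : (0:ℝ) < K := Nat.cast_pos.mpr hK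
  rw [le_div_iff₀ (by positivity)]
  rw [le_div_iff₀ hcpos] at h3
  nlinarith
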